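/- Weighted stability of the Bellman optimality equation. Density-MDP setup with μ(S) < ∞. Let 1 ≤ p ≤ q ≤ ∞, C_{P,p} := sup_{(s,a)} ‖P(s,a,·)‖_{L^{p/(p−1)}(μ)}, and assume γ·C_{P,p} < 1 and γ·C_{P,p}·(|A|·μ(S))^{1/p} < 1. Let d : S × A → ℝ be measurable with C_d := inf_{(s,a)} d(s,a) > 0. Let Q* be measurable with T_B Q* = Q* pointwise, and let Q be measurable with Q − Q* ∈ L^p(S × A) and d·(T_B Q − Q) ∈ L^q(S × A). Then ‖Q − Q*‖_p ≤ (|A|·μ(S))^{1/p − 1/q} / ( C_d · (1 − γ·C_{P,p}·(|A|·μ(S))^{1/p}) ) · ‖d·(T_B Q − Q)‖_q. In particular T_B Q = Q is stable from the (q, d)-weighted seminorm to L^p. -/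

import Mathlib

open MeasureTheory
open scoped ENNReal

private lemma bdd_fin {A : Type*} [Finite A] (h : A → ℝ) : BddAbove (Set.range h) :=
  (Set.finite_range h).bddAbove

private lemma abs_ciSup_sub_ciSup {A : Type*} [Fintype A] [Nonempty A] (f g : A → ℝ) :
    |(⨆ a, f a) - ⨆ a, g a| ≤ ⨆ a, |f a - g a| := by
  rw [abs_sub_le_iff]
  constructor
  · rw [sub_le_iff_le_add]
    refine ciSup_le fun a => ?_
    have h1 : f a ≤ |f a - g a| + g a := by
      have := le_abs_self (f a - g a); linarith
    exact h1.trans (add_le_add (le_ciSup (f := fun a => |f a - g a|) (bdd_fin _) a) (le_ciSup (bdd_fin g) a))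
  · rw [sub_le_iff_le_add]
    refine ciSup_le fun a => ?_
    have h1 : g a ≤ |f a - g a| + f a := by
      have := neg_abs_le (f a - g a); linarith
    exact h1.trans (add_le_add (le_ciSup (f := fun a => |f a - g a|) (bdd_fin _) a) (le_ciSup (bdd_fin f) a))

private lemma sup_eLpNorm_le {S : Type*} [MeasurableSpace S] (μ : Measure S)
    {A : Type*} [Fintype A] [Nonempty A] [MeasurableSpace A] [MeasurableSingletonClass A]
    (p : ℝ≥0∞) (f : S × A → ℝ) (hf : Measurable f) (g : S → ℝ)
    (hbound : ∀ s, ‖g s‖ ≤ ⨆ a, ‖f (s, a)‖) :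
    eLpNorm g p μ ≤ eLpNorm f p (μ.prod Measure.count) := by
  have key : ∀ s : S, ∃ a₀ : A, ∀ a : A, ‖g s‖ ≤ ‖f (s, a₀)‖ ∧ ‖f (s, a)‖ ≤ ‖f (s, a₀)‖ := by
    intro s
    obtain ⟨a₀, ha₀⟩ := exists_eq_ciSup_of_finite (f := fun a => ‖f (s, a)‖)
    exact ⟨a₀, fun a => ⟨(hbound s).trans ha₀.ge,
      (le_ciSup (bdd_fin fun a => ‖f (s, a)‖) a).trans ha₀.ge⟩⟩
  rcases eq_or_ne p 0 with rfl | hp0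
  · simp
  rcases eq_or_ne p ∞ with rfl | hptop
  · rw [eLpNorm_exponent_top, eLpNorm_exponent_top]
    set M := eLpNormEssSup f (μ.prod Measure.count) with hM
    have h1 : ∀ᵐ x ∂(μ.prod (Measure.count : Measure A)), (‖f x‖₊ : ℝ≥0∞) ≤ M :=
      ae_le_eLpNormEssSup
    have h2 := MeasureTheory.Measure.ae_ae_of_ae_prod h1
    refine essSup_le_of_ae_le M ?_
    filter_upwards [h2] with s hs
    rw [MeasureTheory.ae_iff, Measure.count_eq_zero_iff] at hs
    have hall : ∀ a : A, (‖f (s, a)‖₊ : ℝ≥0∞) ≤ M := by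
      intro a
      by_contra hcon
      exact (Set.eq_empty_iff_forall_notMem.mp hs a) hcon
    obtain ⟨a₀, ha₀⟩ := key s
    have : ‖g s‖₊ ≤ ‖f (s, a₀)‖₊ := by
      rw [← NNReal.coe_le_coe]; simpa using (ha₀ a₀).1
    exact le_trans (ENNReal.coe_le_coe.mpr this) (hall a₀)
  · have hpr : 0 < p.toReal := ENNReal.toReal_pos hp0 hptop
    rw [eLpNorm_eq_lintegral_rpow_enorm_toReal hp0 hptop,
      eLpNorm_eq_lintegral_rpow_enorm_toReal hp0 hptop]
    refine ENNReal.rpow_le_rpow ?_ (by positivity)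
    have hmeas : AEMeasurable
        (fun x : S × A => ‖f x‖ₑ ^ p.toReal) (μ.prod Measure.count) :=
      (hf.enorm.pow_const _).aemeasurable
    rw [MeasureTheory.lintegral_prod _ hmeas]
    have hpt : ∀ s, (‖g s‖₊ : ℝ≥0∞) ^ p.toReal
        ≤ ∫⁻ a, (‖f (s, a)‖₊ : ℝ≥0∞) ^ p.toReal ∂Measure.count := by
      intro s
      obtain ⟨a₀, ha₀⟩ := key s
      have h1 : (‖g s‖₊ : ℝ≥0∞) ^ p.toReal ≤ (‖f (s, a₀)‖₊ : ℝ≥0∞) ^ p.toReal := by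
        refine ENNReal.rpow_le_rpow ?_ hpr.le
        exact ENNReal.coe_le_coe.mpr (by rw [← NNReal.coe_le_coe]; simpa using (ha₀ a₀).1)
      rw [MeasureTheory.lintegral_count, tsum_fintype]
      exact h1.trans (Finset.single_le_sum
        (f := fun a => (‖f (s, a)‖₊ : ℝ≥0∞) ^ p.toReal)
        (fun a _ => zero_le) (Finset.mem_univ a₀))
    exact lintegral_mono hpt

private lemma abs_le_inv_mul_abs {Cd dd b : ℝ} (hCd : 0 < Cd) (hle : Cd ≤ dd) :
    ‖b‖ ≤ ‖Cd⁻¹ * (dd * b)‖ := by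
  rw [Real.norm_eq_abs, Real.norm_eq_abs, abs_mul, abs_mul,
    abs_of_pos (inv_pos.mpr hCd), abs_of_pos (hCd.trans_le hle)]
  calc |b| = Cd⁻¹ * (Cd * |b|) := by field_simp
    _ ≤ Cd⁻¹ * (dd * |b|) := by gcongr

/-- Weighted stability of the Bellman optimality equation: for a weight `d` bounded below by
`C_d > 0`, under `γ C_{P,p} < 1` and `γ C_{P,p} (|A| μ(S))^{1/p} < 1`, with `1 ≤ p ≤ q ≤ ∞` and
`p'` the conjugate exponent of `p`, the `L^p` distance of `Q` to the Bellman fixed point `Q*`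
is controlled by the `(q,d)`-weighted seminorm of the Bellman error of `Q`. -/
theorem stmt8 {S : Type*} [MeasurableSpace S] (μ : Measure S) [IsFiniteMeasure μ]
    {A : Type*} [Fintype A] [Nonempty A] [MeasurableSpace A] [MeasurableSingletonClass A]
    (r : S → A → ℝ) (hr : ∀ a, Measurable (fun s => r s a))
    (γ : ℝ) (hγ0 : 0 < γ) (hγ1 : γ < 1)
    (P : S → A → S → ℝ)
    (hPmeas : ∀ a, Measurable (fun x : S × S => P x.1 a x.2))
    (hPnonneg : ∀ s a s', 0 ≤ P s a s')
    (hPint : ∀ s a, ∫ s', P s a s' ∂μ = 1)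
    (p q p' : ℝ≥0∞) (hp : 1 ≤ p) (hpq : p ≤ q) (hp' : 1/p + 1/p' = 1)
    (C : ℝ≥0∞) (hC : C = ⨆ s, ⨆ a, eLpNorm (fun s' => P s a s') p' μ)
    (h1 : ENNReal.ofReal γ * C < 1)
    (h2 : ENNReal.ofReal γ * C * ((Fintype.card A : ℝ≥0∞) * μ Set.univ) ^ (1/p).toReal < 1)
    (d : S → A → ℝ) (hd : ∀ a, Measurable (fun s => d s a))
    (Cd : ℝ) (hCdpos : 0 < Cd) (hCdle : ∀ s a, Cd ≤ d s a)
    (Qstar Q : S → A → ℝ)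
    (hQstarMeas : ∀ a, Measurable (fun s => Qstar s a))
    (hQMeas : ∀ a, Measurable (fun s => Q s a))
    (hfix : ∀ s a, r s a + γ * ∫ s', (⨆ a', Qstar s' a') * P s a s' ∂μ = Qstar s a)
    (hmemp : MemLp (fun x : S × A => Q x.1 x.2 - Qstar x.1 x.2) p (μ.prod Measure.count))
    (hmemq : MemLp
      (fun x : S × A =>
        d x.1 x.2 * ((r x.1 x.2 + γ * ∫ s', (⨆ a', Q s' a') * P x.1 x.2 s' ∂μ) - Q x.1 x.2))
      q (μ.prod Measure.count)) :
    eLpNorm (fun x : S × A => Q x.1 x.2 - Qstar x.1 x.2) p (μ.prod Measure.count) ≤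
      ((Fintype.card A : ℝ≥0∞) * μ Set.univ) ^ (1/p - 1/q).toReal /
        (ENNReal.ofReal Cd *
          (1 - ENNReal.ofReal γ * C * ((Fintype.card A : ℝ≥0∞) * μ Set.univ) ^ (1/p).toReal)) *
      eLpNorm
        (fun x : S × A =>
          d x.1 x.2 * ((r x.1 x.2 + γ * ∫ s', (⨆ a', Q s' a') * P x.1 x.2 s' ∂μ) - Q x.1 x.2))
        q (μ.prod Measure.count) := by
  classical
  set ν : Measure (S × A) := μ.prod Measure.count with hνdef
  set E : S × A → ℝ := fun x => Q x.1 x.2 - Qstar x.1 x.2 with hEdef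
  set DB : S × A → ℝ := fun x : S × A =>
      d x.1 x.2 * ((r x.1 x.2 + γ * ∫ s', (⨆ a', Q s' a') * P x.1 x.2 s' ∂μ) - Q x.1 x.2)
    with hDBdef
  set N : ℝ≥0∞ := (Fintype.card A : ℝ≥0∞) * μ Set.univ with hNdef
  set c : ℝ≥0∞ := ENNReal.ofReal γ * C * N ^ (1/p).toReal with hcdef
  set g : S → ℝ := fun s => (⨆ a', Q s a') - ⨆ a', Qstar s a' with hgdef
  set B : S × A → ℝ := fun x : S × A =>
      (r x.1 x.2 + γ * ∫ s', (⨆ a', Q s' a') * P x.1 x.2 s' ∂μ) - Q x.1 x.2 with hBdef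
  set I : S × A → ℝ := fun x : S × A => ∫ s', g s' * P x.1 x.2 s' ∂μ with hIdef
  -- measurability
  have hVm : Measurable fun s => ⨆ a', Q s a' := Measurable.iSup fun a => hQMeas a
  have hWm : Measurable fun s => ⨆ a', Qstar s a' := Measurable.iSup fun a => hQstarMeas a
  have hgm : Measurable g := hVm.sub hWm
  have hEm : Measurable E := measurable_from_prod_countable_left fun a => (hQMeas a).sub (hQstarMeas a)
  have hIVm : ∀ a : A, Measurable fun s => ∫ s', (⨆ a', Q s' a') * P s a s' ∂μ := fun a => by
    have hm : StronglyMeasurable fun x : S × S => (⨆ a', Q x.2 a') * P x.1 a x.2 :=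
      ((hVm.comp measurable_snd).mul (hPmeas a)).stronglyMeasurable
    exact hm.integral_prod_right'.measurable
  have hIam : ∀ a : A, Measurable fun s => ∫ s', g s' * P s a s' ∂μ := fun a => by
    have hm : StronglyMeasurable fun x : S × S => g x.2 * P x.1 a x.2 :=
      ((hgm.comp measurable_snd).mul (hPmeas a)).stronglyMeasurable
    exact hm.integral_prod_right'.measurable
  have hBm : Measurable B := measurable_from_prod_countable_left fun a =>
    ((hr a).add ((hIVm a).const_mul γ)).sub (hQMeas a)
  have hIm : Measurable I := measurable_from_prod_countable_left fun a => hIam a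
  -- basic constants
  have hγne : ENNReal.ofReal γ ≠ 0 := by simp [ENNReal.ofReal_eq_zero, not_le, hγ0]
  have hCtop : C ≠ ∞ := by
    intro h
    rw [h, ENNReal.mul_top hγne] at h1
    exact absurd h1 (by simp)
  have hCle : ∀ s a, eLpNorm (fun s' => P s a s') p' μ ≤ C := fun s a => by
    rw [hC]
    exact le_iSup₂ (f := fun s a => eLpNorm (fun s' => P s a s') p' μ) s a
  have hνuniv : ν Set.univ = N := by
    rw [hνdef, ← Set.univ_prod_univ, Measure.prod_prod, Measure.count_univ, mul_comm, hNdef]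
    simp
  have hPmem : ∀ s a, MemLp (fun s' => P s a s') p' μ := fun s a =>
    ⟨((hPmeas a).comp (measurable_const.prodMk measurable_id)).aestronglyMeasurable,
      (hCle s a).trans_lt hCtop.lt_top⟩
  have hgE : eLpNorm g p μ ≤ eLpNorm E p ν := by
    refine sup_eLpNorm_le μ p E hEm g fun s => ?_
    have h := abs_ciSup_sub_ciSup (fun a => Q s a) (fun a => Qstar s a)
    simpa [hgdef, hEdef, Real.norm_eq_abs] using h
  have hgmem : MemLp g p μ := ⟨hgm.aestronglyMeasurable, lt_of_le_of_lt hgE hmemp.2⟩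
  have hconj : (1 : ℝ≥0∞)/1 = 1/p' + 1/p := by
    rw [div_one]; exact hp'.symm.trans (add_comm _ _)
  -- integrability of the Hölder products
  have hPg : ∀ s a, MemLp (fun s' => P s a s' * g s') 1 μ := fun s a => by
    refine ⟨(((hPmeas a).comp (measurable_const.prodMk measurable_id)).mul
      hgm).aestronglyMeasurable, ?_⟩
    have hb := eLpNorm_smul_le_mul_eLpNorm (μ := μ)
      hgmem.aestronglyMeasurable (hPmem s a).aestronglyMeasurable (p := p') (q := p) (r := 1) (hpqr := ⟨by simpa [one_div] using hconj.symm⟩)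
    have heq : ((fun s' => P s a s') • g) = fun s' => P s a s' * g s' := rfl
    rw [heq] at hb
    refine lt_of_le_of_lt (hb.trans (mul_le_mul' (hCle s a) le_rfl)) ?_
    exact ENNReal.mul_lt_top hCtop.lt_top hgmem.2
  have hint : ∀ s a, Integrable (fun s' => g s' * P s a s') μ := fun s a =>
    (memLp_one_iff_integrable.mp (hPg s a)).congr
      (Filter.Eventually.of_forall fun s' => mul_comm _ _)
  -- pointwise bound
  have hpt : ∀ x : S × A, ‖E x‖ ≤ ‖|B x| + γ * |I x|‖ := by
    rintro ⟨s, a⟩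
    have hfix' := hfix s a
    have hEeq : E (s, a) = -(B (s, a)) +
        γ * ((∫ s', (⨆ a', Q s' a') * P s a s' ∂μ) -
          ∫ s', (⨆ a', Qstar s' a') * P s a s' ∂μ) := by
      simp only [hEdef, hBdef]
      rw [← hfix']
      ring
    have hkey : |(∫ s', (⨆ a', Q s' a') * P s a s' ∂μ) -
        ∫ s', (⨆ a', Qstar s' a') * P s a s' ∂μ| ≤ |I (s, a)| := by
      by_cases hW : Integrable (fun s' => (⨆ a', Qstar s' a') * P s a s') μ
      · have heq : (fun s' => (⨆ a', Q s' a') * P s a s') =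
            fun s' => g s' * P s a s' + (⨆ a', Qstar s' a') * P s a s' := by
          funext s'; simp only [hgdef]; ring
        rw [heq, integral_add (hint s a) hW]
        simp only [hIdef, add_sub_cancel_right]
        exact le_rfl
      · have hV : ¬ Integrable (fun s' => (⨆ a', Q s' a') * P s a s') μ := by
          intro hV
          apply hW
          have heq : (fun s' => (⨆ a', Qstar s' a') * P s a s') =
              fun s' => (⨆ a', Q s' a') * P s a s' - g s' * P s a s' := by
            funext s'; simp only [hgdef]; ring
          rw [heq]
          exact hV.sub (hint s a)
        rw [integral_undef hV, integral_undef hW]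
        simp [abs_nonneg]
    have habs : |E (s, a)| ≤ |B (s, a)| + γ * |I (s, a)| := by
      rw [hEeq]
      refine (abs_add_le _ _).trans ?_
      rw [abs_neg, abs_mul, abs_of_pos hγ0]
      exact add_le_add le_rfl (mul_le_mul_of_nonneg_left hkey hγ0.le)
    rw [Real.norm_eq_abs, Real.norm_eq_abs]
    exact habs.trans (le_abs_self _)
  -- triangle inequality
  have step1 : eLpNorm E p ν ≤ eLpNorm B p ν + ENNReal.ofReal γ * eLpNorm I p ν := by
    calc eLpNorm E p ν ≤ eLpNorm (fun x => |B x| + γ * |I x|) p ν := eLpNorm_mono hpt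
      _ ≤ eLpNorm (fun x => |B x|) p ν + eLpNorm (fun x => γ * |I x|) p ν :=
          eLpNorm_add_le hBm.abs.aestronglyMeasurable
            ((hIm.abs.const_mul γ).aestronglyMeasurable) hp
      _ = eLpNorm B p ν + ENNReal.ofReal γ * eLpNorm I p ν := by
          congr 1
          · exact eLpNorm_norm B
          · have hs : (fun x : S × A => γ * |I x|) = γ • fun x => |I x| := rfl
            rw [hs, eLpNorm_const_smul, Real.enorm_eq_ofReal hγ0.le]
            congr 1
            exact eLpNorm_norm I
  -- bound on the I-term
  have hKne : C * eLpNorm g p μ ≠ ∞ := ENNReal.mul_ne_top hCtop hgmem.2.ne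
  have hIbd : ∀ x : S × A, (‖I x‖₊ : ℝ≥0∞) ≤ C * eLpNorm g p μ := by
    rintro ⟨s, a⟩
    calc (‖I (s, a)‖₊ : ℝ≥0∞) ≤ ∫⁻ s', ‖g s' * P s a s'‖₊ ∂μ := by
          simpa [hIdef, enorm_eq_nnnorm] using
            enorm_integral_le_lintegral_enorm (μ := μ) (fun s' => g s' * P s a s')
      _ = eLpNorm ((fun s' => P s a s') • g) 1 μ := by
          rw [eLpNorm_one_eq_lintegral_enorm]
          congr 1
          funext s'
          rw [Pi.smul_apply', smul_eq_mul, mul_comm]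
          rfl
      _ ≤ eLpNorm (fun s' => P s a s') p' μ * eLpNorm g p μ :=
          eLpNorm_smul_le_mul_eLpNorm hgmem.aestronglyMeasurable
            (hPmem s a).aestronglyMeasurable (p := p') (q := p) (r := 1) (hpqr := ⟨by simpa [one_div] using hconj.symm⟩)
      _ ≤ C * eLpNorm g p μ := mul_le_mul' (hCle s a) le_rfl
  have hInorm : eLpNorm I p ν ≤ C * eLpNorm g p μ * N ^ (1/p).toReal := by
    have hb : ∀ᵐ x ∂ν, ‖I x‖₊ ≤ (C * eLpNorm g p μ).toNNReal :=
      Filter.Eventually.of_forall fun x =>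
        ENNReal.coe_le_coe.mp ((hIbd x).trans_eq (ENNReal.coe_toNNReal hKne).symm)
    have h := eLpNorm_le_of_ae_nnnorm_bound (μ := ν) (p := p) hb
    calc eLpNorm I p ν ≤ ((C * eLpNorm g p μ).toNNReal : ℝ≥0∞) * (ν Set.univ) ^ p.toReal⁻¹ := by
          simpa [ENNReal.smul_def, smul_eq_mul] using h
      _ = C * eLpNorm g p μ * N ^ (1/p).toReal := by
          rw [hνuniv, ENNReal.coe_toNNReal hKne, one_div, ENNReal.toReal_inv]
  have stepA : eLpNorm E p ν ≤ eLpNorm B p ν + c * eLpNorm E p ν := by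
    refine step1.trans (add_le_add le_rfl ?_)
    calc ENNReal.ofReal γ * eLpNorm I p ν
        ≤ ENNReal.ofReal γ * (C * eLpNorm g p μ * N ^ (1/p).toReal) := mul_le_mul' le_rfl hInorm
      _ = c * eLpNorm g p μ := by rw [hcdef]; ring
      _ ≤ c * eLpNorm E p ν := mul_le_mul' le_rfl hgE
  -- solve the recursive inequality
  have hXne : eLpNorm E p ν ≠ ∞ := hmemp.2.ne
  have hsub : (1 - c) * eLpNorm E p ν ≤ eLpNorm B p ν := by
    rw [ENNReal.sub_mul (fun _ _ => hXne), one_mul]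
    exact tsub_le_iff_right.mpr stepA
  have h1c0 : (1 : ℝ≥0∞) - c ≠ 0 := by
    simp only [ne_eq, tsub_eq_zero_iff_le]
    exact not_le.mpr h2
  have h1ctop : (1 : ℝ≥0∞) - c ≠ ∞ := ne_top_of_le_ne_top ENNReal.one_ne_top tsub_le_self
  have hXle : eLpNorm E p ν ≤ (1 - c)⁻¹ * eLpNorm B p ν := by
    rw [← ENNReal.div_eq_inv_mul, ENNReal.le_div_iff_mul_le (Or.inl h1c0) (Or.inl h1ctop),
      mul_comm]
    exact hsub
  -- comparison of exponents
  have hp0 : p ≠ 0 := (lt_of_lt_of_le zero_lt_one hp).ne'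
  have hexp : 1/p.toReal - 1/q.toReal = (1/p - 1/q).toReal := by
    rw [ENNReal.toReal_sub_of_le (by gcongr) (by rw [one_div]; exact ENNReal.inv_ne_top.mpr hp0),
      ENNReal.toReal_div, ENNReal.toReal_div, ENNReal.toReal_one]
  have hBq : eLpNorm B p ν ≤ eLpNorm B q ν * N ^ (1/p - 1/q).toReal := by
    have h := eLpNorm_le_eLpNorm_mul_rpow_measure_univ (μ := ν) hpq hBm.aestronglyMeasurable
    rwa [hνuniv, hexp] at h
  -- removing the weight d
  have hDBB : ∀ x : S × A, DB x = d x.1 x.2 * B x := fun x => rfl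
  have hCdinv : eLpNorm B q ν ≤ (ENNReal.ofReal Cd)⁻¹ * eLpNorm DB q ν := by
    have hmono : eLpNorm B q ν ≤ eLpNorm (Cd⁻¹ • DB) q ν := by
      refine eLpNorm_mono fun x => ?_
      rw [Pi.smul_apply, smul_eq_mul, hDBB]
      exact abs_le_inv_mul_abs hCdpos (hCdle _ _)
    calc eLpNorm B q ν ≤ eLpNorm (Cd⁻¹ • DB) q ν := hmono
      _ = (‖Cd⁻¹‖₊ : ℝ≥0∞) * eLpNorm DB q ν := eLpNorm_const_smul _ _ _ _
      _ = (ENNReal.ofReal Cd)⁻¹ * eLpNorm DB q ν := by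
          rw [← enorm_eq_nnnorm, Real.enorm_eq_ofReal (inv_nonneg.mpr hCdpos.le),
            ENNReal.ofReal_inv_of_pos hCdpos]
  have hCd0 : ENNReal.ofReal Cd ≠ 0 := by simp [ENNReal.ofReal_eq_zero, not_le, hCdpos]
  calc eLpNorm E p ν ≤ (1 - c)⁻¹ * eLpNorm B p ν := hXle
    _ ≤ (1 - c)⁻¹ * (eLpNorm B q ν * N ^ (1/p - 1/q).toReal) := mul_le_mul' le_rfl hBq
    _ ≤ (1 - c)⁻¹ * ((ENNReal.ofReal Cd)⁻¹ * eLpNorm DB q ν * N ^ (1/p - 1/q).toReal) :=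
        mul_le_mul' le_rfl (mul_le_mul' hCdinv le_rfl)
    _ = N ^ (1/p - 1/q).toReal / (ENNReal.ofReal Cd * (1 - c)) * eLpNorm DB q ν := by
        have hmi : (ENNReal.ofReal Cd * (1 - c))⁻¹ = (ENNReal.ofReal Cd)⁻¹ * (1 - c)⁻¹ :=
          ENNReal.mul_inv (Or.inl hCd0) (Or.inl ENNReal.ofReal_ne_top)
        generalize (1/p - 1/q).toReal = e
        rw [div_eq_mul_inv, hmi]
        ring
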